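/- Let a_1, a_2, a_3, a_4 be four points in ℝ² (the BSs), no three of which are collinear, and let X = {p_1, p_2} ⊆ ℝ² be a set of two targets. If a ghost configuration X^G exists for X, then there is a partition of {1,2,3,4} into two pairs {i,j} and {k,l} such that the line through a_i and a_j is perpendicular to the line through a_k and a_l, and the intersection point O of these two lines is the midpoint of the segment joining p_1 and p_2, i.e., p_1 + p_2 = 2·O. -/

import Mathlib

noncomputable section

/-- The Euclidean plane ℝ². -/
abbrev Plane := EuclideanSpace ℝ (Fin 2)

/-- The range set of a BS located at `a` with respect to a target set `X`:
the set of distances from `a` to the points of `X`. -/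
def rangeSet (a : Plane) (X : Set Plane) : Set ℝ := (fun p => dist a p) '' X

open AffineSubspace

lemma dist_eq_inner_eq {x p q : Plane} (h : dist x q = dist x p) :
    2 * (inner ℝ x (p - q) : ℝ) = ‖p‖ ^ 2 - ‖q‖ ^ 2 := by
  have h2 : ‖x - q‖ ^ 2 = ‖x - p‖ ^ 2 := by rw [← dist_eq_norm, ← dist_eq_norm, h]
  rw [norm_sub_sq_real, norm_sub_sq_real] at h2
  rw [inner_sub_right]
  linarith

lemma inner_add_sub (p q : Plane) : (inner ℝ (p + q) (p - q) : ℝ) = ‖p‖ ^ 2 - ‖q‖ ^ 2 := by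
  simp only [inner_add_left, inner_sub_right, real_inner_self_eq_norm_sq,
    real_inner_comm p q]
  ring

lemma inner_diff {x y p q : Plane} (hx : dist x q = dist x p) (hy : dist y q = dist y p) :
    (inner ℝ (p - q) (x - y) : ℝ) = 0 := by
  have h1 := dist_eq_inner_eq hx
  have h2 := dist_eq_inner_eq hy
  have c1 : (inner ℝ (p - q) x : ℝ) = inner ℝ x (p - q) := real_inner_comm _ _
  have c2 : (inner ℝ (p - q) y : ℝ) = inner ℝ y (p - q) := real_inner_comm _ _
  rw [inner_sub_right]
  linarith

lemma inner_comm0 {x y : Plane} (h : (inner ℝ x y : ℝ) = 0) : (inner ℝ y x : ℝ) = 0 :=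
  (real_inner_comm x y).trans h

lemma mem_orth {v w : Plane} (h : (inner ℝ v w : ℝ) = 0) : w ∈ (ℝ ∙ v)ᗮ := by
  intro u hu
  obtain ⟨c, rfl⟩ := Submodule.mem_span_singleton.1 hu
  rw [real_inner_smul_left, h, mul_zero]

lemma finrank_orth {v : Plane} (hv : v ≠ 0) :
    Module.finrank ℝ ((ℝ ∙ v)ᗮ : Submodule ℝ Plane) = 1 := by
  have h1 := Submodule.finrank_add_finrank_orthogonal (𝕜 := ℝ) (K := (ℝ ∙ v : Submodule ℝ Plane))
  rw [finrank_span_singleton hv] at h1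
  have h2 : Module.finrank ℝ Plane = 2 := finrank_euclideanSpace_fin
  omega

lemma span_eq_orth {v w : Plane} (hv : v ≠ 0) (hw : w ≠ 0) (h : (inner ℝ v w : ℝ) = 0) :
    (ℝ ∙ w) = (ℝ ∙ v)ᗮ := by
  apply Submodule.eq_of_le_of_finrank_eq
  · rw [Submodule.span_singleton_le_iff_mem]
    exact mem_orth h
  · rw [finrank_span_singleton hw, finrank_orth hv]

lemma exists_smul {d u u' : Plane} (hd : d ≠ 0) (hu : u ≠ 0)
    (h1 : (inner ℝ d u : ℝ) = 0) (h2 : (inner ℝ d u' : ℝ) = 0) : ∃ c : ℝ, u' = c • u := by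
  have hspan : (ℝ ∙ u) = (ℝ ∙ d)ᗮ := span_eq_orth hd hu h1
  have hm : u' ∈ (ℝ ∙ d)ᗮ := mem_orth h2
  rw [← hspan, Submodule.mem_span_singleton] at hm
  obtain ⟨c, hc⟩ := hm
  exact ⟨c, hc.symm⟩

lemma collinear_of_inner {v : Plane} (hv : v ≠ 0) {x y z : Plane}
    (hxy : (inner ℝ v (x - y) : ℝ) = 0) (hxz : (inner ℝ v (x - z) : ℝ) = 0) :
    Collinear ℝ ({x, y, z} : Set Plane) := by
  rw [collinear_iff_rank_le_one]
  have hle : vectorSpan ℝ ({x, y, z} : Set Plane) ≤ (ℝ ∙ v)ᗮ := by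
    rw [vectorSpan_def, Submodule.span_le]
    rintro w ⟨p, hp, q, hq, rfl⟩
    have key : ∀ r ∈ ({x, y, z} : Set Plane), (inner ℝ v (x - r) : ℝ) = 0 := by
      rintro r (rfl | rfl | rfl)
      · simp
      · exact hxy
      · exact hxz
    have hp' := key p hp
    have hq' := key q hq
    apply mem_orth
    show (inner ℝ v (p -ᵥ q) : ℝ) = 0
    rw [vsub_eq_sub]
    have heq : p - q = (x - q) - (x - p) := by abel
    rw [heq, inner_sub_right, hp', hq', sub_zero]
  calc Module.rank ℝ (vectorSpan ℝ ({x, y, z} : Set Plane))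
      ≤ Module.rank ℝ ((ℝ ∙ v)ᗮ : Submodule ℝ Plane) := Submodule.rank_mono hle
    _ = 1 := Module.rank_eq_one_iff_finrank_eq_one.2 (finrank_orth hv)

lemma collinear_of_distEq {p q : Plane} (hpq : q ≠ p) {x y z : Plane}
    (hx : dist x q = dist x p) (hy : dist y q = dist y p) (hz : dist z q = dist z p) :
    Collinear ℝ ({x, y, z} : Set Plane) :=
  collinear_of_inner (sub_ne_zero.2 (Ne.symm hpq)) (inner_diff hx hy) (inner_diff hx hz)

lemma span_pair_eq_perpBisector {x y p q : Plane} (hxy : x ≠ y) (hpq : q ≠ p)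
    (hx : dist x q = dist x p) (hy : dist y q = dist y p) :
    affineSpan ℝ ({x, y} : Set Plane) = AffineSubspace.perpBisector q p := by
  apply AffineSubspace.ext_of_direction_eq
  · rw [direction_affineSpan, vectorSpan_pair, AffineSubspace.direction_perpBisector]
    exact span_eq_orth (sub_ne_zero.2 (Ne.symm hpq)) (sub_ne_zero.2 hxy) (inner_diff hx hy)
  · exact ⟨x, left_mem_affineSpan_pair ℝ x y,
      (AffineSubspace.mem_perpBisector_iff_dist_eq).2 hx⟩

lemma norm_add_eq_norm_sub {u w : Plane} (h : (inner ℝ u w : ℝ) = 0) : ‖u + w‖ = ‖w - u‖ := by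
  have h1 : ‖u + w‖ ^ 2 = ‖w - u‖ ^ 2 := by
    have hc : (inner ℝ w u : ℝ) = inner ℝ u w := real_inner_comm _ _
    rw [norm_add_sq_real, norm_sub_sq_real, hc, h]
    ring
  rw [← Real.sqrt_sq (norm_nonneg (u + w)), ← Real.sqrt_sq (norm_nonneg (w - u)), h1]

/-- **Lemma 1 (second part).** With `M = 4` BSs, no three of which are collinear, if a ghost
configuration exists for the two-target set `X = {p₁, p₂}`, then there is a partition of the
BSs into two pairs `{i,j}` and `{k,l}` such that the line through `a i, a j` is perpendicular
to the line through `a k, a l`, and the intersection point `O` of these two lines is the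
midpoint of the segment joining `p₁` and `p₂`, i.e. `p₁ + p₂ = 2 • O`. -/
theorem ghost_implies_perpendicular_midpoint (a : Fin 4 → Plane)
    (hcol : ∀ i j k : Fin 4, i ≠ j → i ≠ k → j ≠ k →
      ¬ Collinear ℝ ({a i, a j, a k} : Set Plane))
    (p₁ p₂ : Plane) (hp : p₁ ≠ p₂)
    (XG : Set Plane) (hGfin : XG.Finite) (hGcard : XG.ncard = 2)
    (hGne : XG ≠ ({p₁, p₂} : Set Plane))
    (hranges : ∀ m : Fin 4, rangeSet (a m) XG = rangeSet (a m) ({p₁, p₂} : Set Plane)) :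
    ∃ i j k l : Fin 4, ({i, j, k, l} : Finset (Fin 4)) = Finset.univ ∧
      (inner ℝ (a j - a i) (a l - a k) : ℝ) = 0 ∧
      ∃ O : Plane, O ∈ affineSpan ℝ ({a i, a j} : Set Plane) ∧
        O ∈ affineSpan ℝ ({a k, a l} : Set Plane) ∧
        p₁ + p₂ = (2 : ℝ) • O := by
  classical
  obtain ⟨q₁, q₂, hq12, rfl⟩ := Set.ncard_eq_two.1 hGcard
  have hr : ∀ m : Fin 4, ({dist (a m) q₁, dist (a m) q₂} : Set ℝ)
      = {dist (a m) p₁, dist (a m) p₂} := by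
    intro m
    have h := hranges m
    simpa [rangeSet, Set.image_pair] using h
  have hcases : ∀ m : Fin 4,
      (dist (a m) q₁ = dist (a m) p₁ ∧ dist (a m) q₂ = dist (a m) p₂) ∨
      (dist (a m) q₁ = dist (a m) p₂ ∧ dist (a m) q₂ = dist (a m) p₁) :=
    fun m => Set.pair_eq_pair_iff.1 (hr m)
  have hNotAll : ∀ x y : Plane, x ≠ y → ¬ (∀ m : Fin 4, dist (a m) x = dist (a m) y) := by
    intro x y hxy hall
    exact hcol 0 1 2 (by decide) (by decide) (by decide)
      (collinear_of_distEq hxy (hall 0) (hall 1) (hall 2))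
  have hq₁p₁ : q₁ ≠ p₁ := by
    rintro rfl
    have hq₂p₂ : q₂ ≠ p₂ := by rintro rfl; exact hGne rfl
    refine hNotAll q₂ p₂ hq₂p₂ (fun m => ?_)
    rcases hcases m with ⟨h1, h2⟩ | ⟨h1, h2⟩
    · exact h2
    · exact h2.trans h1
  have hq₁p₂ : q₁ ≠ p₂ := by
    rintro rfl
    have hq₂p₁ : q₂ ≠ p₁ := by
      rintro rfl
      exact hGne (Set.pair_comm _ _)
    refine hNotAll q₂ p₁ hq₂p₁ (fun m => ?_)
    rcases hcases m with ⟨h1, h2⟩ | ⟨h1, h2⟩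
    · exact h2.trans h1
    · exact h2
  have hq₂p₂ : q₂ ≠ p₂ := by
    rintro rfl
    refine hNotAll q₁ p₁ hq₁p₁ (fun m => ?_)
    rcases hcases m with ⟨h1, h2⟩ | ⟨h1, h2⟩
    · exact h1
    · exact h1.trans h2
  have hq₂p₁ : q₂ ≠ p₁ := by
    rintro rfl
    refine hNotAll q₁ p₂ hq₁p₂ (fun m => ?_)
    rcases hcases m with ⟨h1, h2⟩ | ⟨h1, h2⟩
    · exact h1.trans h2
    · exact h1
  have ha_inj : ∀ i j : Fin 4, i ≠ j → a i ≠ a j := by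
    intro i j hij heq
    have hex : ∀ i j : Fin 4, i ≠ j → ∃ m : Fin 4, m ≠ i ∧ m ≠ j := by decide
    obtain ⟨m, hmi, hmj⟩ := hex i j hij
    apply hcol i j m hij (Ne.symm hmi) (Ne.symm hmj)
    rw [heq]
    have hset : ({a j, a j, a m} : Set Plane) = {a j, a m} := by simp
    rw [hset]
    exact collinear_pair ℝ _ _
  set A : Finset (Fin 4) := Finset.univ.filter
    (fun m => dist (a m) q₁ = dist (a m) p₁ ∧ dist (a m) q₂ = dist (a m) p₂) with hA
  set B : Finset (Fin 4) := Finset.univ.filter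
    (fun m => dist (a m) q₁ = dist (a m) p₂ ∧ dist (a m) q₂ = dist (a m) p₁) with hB
  have hcard_le : ∀ (q p : Plane), q ≠ p → ∀ S : Finset (Fin 4),
      (∀ m ∈ S, dist (a m) q = dist (a m) p) → S.card ≤ 2 := by
    intro q p hqp S hS
    by_contra h
    obtain ⟨i, hi, j, hj, k, hk, hij, hik, hjk⟩ := Finset.two_lt_card.1 (not_le.1 h)
    exact hcol i j k hij hik hjk (collinear_of_distEq hqp (hS i hi) (hS j hj) (hS k hk))
  have hAle := hcard_le q₁ p₁ hq₁p₁ A (fun m hm => ((Finset.mem_filter.1 hm).2).1)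
  have hBle := hcard_le q₁ p₂ hq₁p₂ B (fun m hm => ((Finset.mem_filter.1 hm).2).1)
  have hunion : A ∪ B = Finset.univ := by
    apply Finset.eq_univ_iff_forall.2
    intro m
    rcases hcases m with h | h
    · exact Finset.mem_union_left _ (Finset.mem_filter.2 ⟨Finset.mem_univ m, h⟩)
    · exact Finset.mem_union_right _ (Finset.mem_filter.2 ⟨Finset.mem_univ m, h⟩)
  have h4 : (4 : ℕ) ≤ A.card + B.card := by
    have hu : (A ∪ B).card = 4 := by rw [hunion]; simp
    calc (4 : ℕ) = (A ∪ B).card := hu.symm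
      _ ≤ A.card + B.card := Finset.card_union_le A B
  have hA2 : A.card = 2 := by omega
  have hB2 : B.card = 2 := by omega
  obtain ⟨i, j, hij, hAeq⟩ := Finset.card_eq_two.1 hA2
  obtain ⟨k, l, hkl, hBeq⟩ := Finset.card_eq_two.1 hB2
  have huniv : ({i, j, k, l} : Finset (Fin 4)) = Finset.univ := by
    have hu2 : ({i, j} : Finset (Fin 4)) ∪ {k, l} = Finset.univ := by
      rw [← hAeq, ← hBeq]; exact hunion
    rw [← hu2]
    ext m
    simp only [Finset.mem_insert, Finset.mem_singleton, Finset.mem_union]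
    tauto
  have hiA : i ∈ A := by rw [hAeq]; simp
  have hjA : j ∈ A := by rw [hAeq]; simp
  have hkB : k ∈ B := by rw [hBeq]; simp
  have hlB : l ∈ B := by rw [hBeq]; simp
  have hAi := (Finset.mem_filter.1 hiA).2
  have hAj := (Finset.mem_filter.1 hjA).2
  have hBk := (Finset.mem_filter.1 hkB).2
  have hBl := (Finset.mem_filter.1 hlB).2
  have hdij : a i ≠ a j := ha_inj i j hij
  have hdkl : a k ≠ a l := ha_inj k l hkl
  have hu0 : p₁ - q₁ ≠ 0 := sub_ne_zero.2 (Ne.symm hq₁p₁)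
  have hw0 : p₂ - q₁ ≠ 0 := sub_ne_zero.2 (Ne.symm hq₁p₂)
  have hu'0 : p₂ - q₂ ≠ 0 := sub_ne_zero.2 (Ne.symm hq₂p₂)
  have hw'0 : p₁ - q₂ ≠ 0 := sub_ne_zero.2 (Ne.symm hq₂p₁)
  have hd0 : a j - a i ≠ 0 := sub_ne_zero.2 (Ne.symm hdij)
  have he0 : a l - a k ≠ 0 := sub_ne_zero.2 (Ne.symm hdkl)
  have hud : (inner ℝ (p₁ - q₁) (a j - a i) : ℝ) = 0 := inner_diff hAj.1 hAi.1
  have hu'd : (inner ℝ (p₂ - q₂) (a j - a i) : ℝ) = 0 := inner_diff hAj.2 hAi.2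
  have hwe : (inner ℝ (p₂ - q₁) (a l - a k) : ℝ) = 0 := inner_diff hBl.1 hBk.1
  have hw'e : (inner ℝ (p₁ - q₂) (a l - a k) : ℝ) = 0 := inner_diff hBl.2 hBk.2
  obtain ⟨α, hα⟩ := exists_smul hd0 hu0 (inner_comm0 hud) (inner_comm0 hu'd)
  obtain ⟨β, hβ⟩ := exists_smul he0 hw0 (inner_comm0 hwe) (inner_comm0 hw'e)
  have hα0 : α ≠ 0 := by
    rintro rfl; rw [zero_smul] at hα; exact hu'0 hα
  have hβ0 : β ≠ 0 := by
    rintro rfl; rw [zero_smul] at hβ; exact hw'0 hβ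
  have key1 : (inner ℝ ((p₂ + q₂) - (p₁ + q₁)) (p₁ - q₁) : ℝ) = 0 := by
    have e1 := dist_eq_inner_eq hAi.1
    have e2 := dist_eq_inner_eq hAi.2
    have e3 := inner_add_sub p₁ q₁
    have e4 := inner_add_sub p₂ q₂
    rw [hα, real_inner_smul_right] at e2
    rw [hα, real_inner_smul_right] at e4
    rw [inner_sub_left]
    have h5 : α * (inner ℝ (p₂ + q₂) (p₁ - q₁) : ℝ) = α * (2 * inner ℝ (a i) (p₁ - q₁)) := by
      rw [e4, ← e2]; ring
    have h6 := mul_left_cancel₀ hα0 h5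
    linarith
  have key2 : (inner ℝ ((p₁ + q₂) - (p₂ + q₁)) (p₂ - q₁) : ℝ) = 0 := by
    have e1 := dist_eq_inner_eq hBk.1
    have e2 := dist_eq_inner_eq hBk.2
    have e3 := inner_add_sub p₂ q₁
    have e4 := inner_add_sub p₁ q₂
    rw [hβ, real_inner_smul_right] at e2
    rw [hβ, real_inner_smul_right] at e4
    rw [inner_sub_left]
    have h5 : β * (inner ℝ (p₁ + q₂) (p₂ - q₁) : ℝ) = β * (2 * inner ℝ (a k) (p₂ - q₁)) := by
      rw [e4, ← e2]; ring
    have h6 := mul_left_cancel₀ hβ0 h5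
    linarith
  have huw : (inner ℝ (p₁ - q₁) (p₂ - q₁) : ℝ) = 0 := by
    by_cases hα1 : α = 1
    · by_cases hβ1 : β = 1
      · exfalso
        rw [hα1, one_smul] at hα
        rw [hβ1, one_smul] at hβ
        have h3 : p₂ - p₁ = p₁ - p₂ := by
          calc p₂ - p₁ = (p₂ - q₂) - (p₁ - q₂) := by abel
            _ = (p₁ - q₁) - (p₂ - q₁) := by rw [hα, hβ]
            _ = p₁ - p₂ := by abel
        have h4 : (p₂ - p₁) + (p₁ - p₂) = (0 : Plane) := by abel
        rw [← h3] at h4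
        have h5 : (2 : ℝ) • (p₂ - p₁) = 0 := by
          rw [two_smul]; exact h4
        rcases smul_eq_zero.1 h5 with h | h
        · norm_num at h
        · exact hp (sub_eq_zero.1 h).symm
      · -- β ≠ 1
        have hrw : (p₂ + q₂) - (p₁ + q₁) = (1 - β) • (p₂ - q₁) := by
          have habel : (p₂ + q₂) - (p₁ + q₁) = (p₂ - q₁) - (p₁ - q₂) := by abel
          rw [habel, hβ, sub_smul, one_smul]
        rw [hrw, real_inner_smul_left] at key1
        rcases mul_eq_zero.1 key1 with h | h
        · exact absurd (by linarith : β = 1) hβ1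
        · exact inner_comm0 h
    · -- α ≠ 1
      have hrw : (p₁ + q₂) - (p₂ + q₁) = (1 - α) • (p₁ - q₁) := by
        have habel : (p₁ + q₂) - (p₂ + q₁) = (p₁ - q₁) - (p₂ - q₂) := by abel
        rw [habel, hα, sub_smul, one_smul]
      rw [hrw, real_inner_smul_left] at key2
      rcases mul_eq_zero.1 key2 with h | h
      · exact absurd (by linarith : α = 1) hα1
      · exact h
  have hperp : (inner ℝ (a j - a i) (a l - a k) : ℝ) = 0 := by
    obtain ⟨c, hc⟩ := exists_smul hu0 hw0 huw hud
    rw [hc, real_inner_smul_left, hwe, mul_zero]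
  refine ⟨i, j, k, l, huniv, hperp, (2⁻¹ : ℝ) • (p₁ + p₂), ?_, ?_, ?_⟩
  · rw [span_pair_eq_perpBisector hdij hq₁p₁ hAi.1 hAj.1,
      AffineSubspace.mem_perpBisector_iff_dist_eq]
    have hd1 : (2⁻¹ : ℝ) • (p₁ + p₂) - q₁ = (2⁻¹ : ℝ) • ((p₁ - q₁) + (p₂ - q₁)) := by
      module
    have hd2 : (2⁻¹ : ℝ) • (p₁ + p₂) - p₁ = (2⁻¹ : ℝ) • ((p₂ - q₁) - (p₁ - q₁)) := by
      module
    rw [dist_eq_norm, dist_eq_norm, hd1, hd2, norm_smul, norm_smul]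
    congr 1
    exact norm_add_eq_norm_sub huw
  · rw [span_pair_eq_perpBisector hdkl hq₁p₂ hBk.1 hBl.1,
      AffineSubspace.mem_perpBisector_iff_dist_eq]
    have hd1 : (2⁻¹ : ℝ) • (p₁ + p₂) - q₁ = (2⁻¹ : ℝ) • ((p₁ - q₁) + (p₂ - q₁)) := by
      module
    have hd2 : (2⁻¹ : ℝ) • (p₁ + p₂) - p₂ = (2⁻¹ : ℝ) • ((p₁ - q₁) - (p₂ - q₁)) := by
      module
    rw [dist_eq_norm, dist_eq_norm, hd1, hd2, norm_smul, norm_smul]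
    congr 1
    have hsw := norm_add_eq_norm_sub (inner_comm0 huw)
    rw [add_comm (p₂ - q₁) (p₁ - q₁)] at hsw
    exact hsw
  · rw [smul_smul]
    norm_num
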